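/- If the pair (A*, B*) is approximately observable in any time, then for every τ > 0 the functional J^τ(η) = (1/2)(∫_0^τ ||B*T*_{τ-t}η||_U dt)² + ⟨ψ, T*_τη⟩ + r||η|| is continuous, strictly convex and coercive on X, and hence has a unique minimizer. -/

import Mathlib

open MeasureTheory Filter
open scoped RealInnerProductSpace

section AuxLemmas

open InnerProductSpace

variable {X : Type*} [NormedAddCommGroup X] [InnerProductSpace ℝ X] [CompleteSpace X]

/-- A point satisfying all dual inequalities of a closed convex set belongs to it. -/
lemma mem_of_dual_ineq {C : Set X} (hCc : Convex ℝ C) (hCcl : IsClosed C) {η : X}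
    (h : ∀ (v : X) (c : ℝ), (∀ y ∈ C, ⟪y, v⟫ ≤ c) → ⟪η, v⟫ ≤ c) : η ∈ C := by
  by_contra hη
  obtain ⟨L, u, hLC, hLη⟩ := geometric_hahn_banach_closed_point hCc hCcl hη
  set v := (toDual ℝ X).symm L with hv
  have hvy : ∀ y : X, ⟪y, v⟫ = L y := by
    intro y; rw [real_inner_comm]; exact toDual_symm_apply
  have h2 := h v u (fun y hy => (hvy y).le.trans (hLC y hy).le)
  rw [hvy η] at h2
  exact absurd hLη (not_lt.mpr h2)

/-- Weak compactness: bounded decreasing sequences of nonempty closed convex sets in a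
Hilbert space have a common point. -/
lemma weak_fip {R : ℝ} (C : ℕ → Set X) (hdec : ∀ n, C (n + 1) ⊆ C n)
    (hcvx : ∀ n, Convex ℝ (C n)) (hcl : ∀ n, IsClosed (C n))
    (hne : ∀ n, (C n).Nonempty) (hbd : ∀ n, C n ⊆ Metric.closedBall 0 R) :
    ∃ x : X, ∀ n, x ∈ C n := by
  classical
  set K : Set (WeakDual ℝ X) := WeakDual.toStrongDual ⁻¹' Metric.closedBall 0 R with hK
  have hKcomp : IsCompact K := WeakDual.isCompact_closedBall (0 : StrongDual ℝ X) R
  have hKcl : IsClosed K := WeakDual.isClosed_closedBall (0 : StrongDual ℝ X) R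
  set S : ℕ → Set (WeakDual ℝ X) := fun n =>
    {f | ∀ (v : X) (c : ℝ), (∀ y ∈ C n, ⟪y, v⟫ ≤ c) → f v ≤ c} with hS
  have hScl : ∀ n, IsClosed (S n) := by
    intro n
    have : S n = ⋂ (v : X), ⋂ (c : ℝ), ⋂ (_ : ∀ y ∈ C n, ⟪y, v⟫ ≤ c),
        {f : WeakDual ℝ X | f v ≤ c} := by
      ext f; simp only [hS, Set.mem_setOf_eq, Set.mem_iInter]
    rw [this]
    exact isClosed_iInter fun v => isClosed_iInter fun c => isClosed_iInter fun _ =>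
      IsClosed.preimage (WeakDual.eval_continuous v) isClosed_Iic
  have hnonempty : ∀ n, (K ∩ S n).Nonempty := by
    intro n
    obtain ⟨x, hx⟩ := hne n
    refine ⟨(toDual ℝ X x : StrongDual ℝ X), ?_, ?_⟩
    · have hxR : ‖toDual ℝ X x‖ ≤ R := by
        rw [LinearIsometryEquiv.norm_map]
        simpa [mem_closedBall_zero_iff] using hbd n hx
      exact mem_closedBall_zero_iff.mpr hxR
    · intro v c hvc
      exact hvc x hx
  have hmono : ∀ n, K ∩ S (n + 1) ⊆ K ∩ S n := by
    intro n f hf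
    exact ⟨hf.1, fun v c hvc => hf.2 v c (fun y hy => hvc y (hdec n hy))⟩
  obtain ⟨f, hf⟩ := IsCompact.nonempty_iInter_of_sequence_nonempty_isCompact_isClosed
    (fun n => K ∩ S n) hmono hnonempty (hKcomp.inter_right (hScl 0))
    (fun n => hKcl.inter (hScl n))
  set x₀ := (toDual ℝ X).symm (WeakDual.toStrongDual f) with hx₀
  have happ : ∀ v : X, ⟪x₀, v⟫ = f v := by
    intro v; rw [hx₀, toDual_symm_apply]; rfl
  refine ⟨x₀, fun n => ?_⟩
  have hfn : f ∈ K ∩ S n := Set.mem_iInter.mp hf n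
  exact mem_of_dual_ineq (hcvx n) (hcl n) (fun v c hvc => (happ v) ▸ hfn.2 v c hvc)

/-- Key lemma: vectors in the unit ball on which a definite convex functional is small
have small inner product against any fixed vector. -/
lemma key_small_inner (F : X → ℝ) (hFc : Continuous F) (hFcvx : ConvexOn ℝ Set.univ F)
    (hFnn : ∀ x, 0 ≤ F x) (hFdef : ∀ x, F x = 0 → x = 0) (φ : X) {ε : ℝ} (hε : 0 < ε) :
    ∃ δ > 0, ∀ ζ : X, ‖ζ‖ ≤ 1 → F ζ ≤ δ → ⟪φ, ζ⟫ < ε := by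
  by_contra h
  push_neg at h
  set C : ℕ → Set X := fun n => {x | ‖x‖ ≤ 1 ∧ F x ≤ 1 / (n + 1) ∧ ε ≤ ⟪φ, x⟫} with hC
  have hinv_pos : ∀ n : ℕ, (0:ℝ) < 1 / (n + 1) := by intro n; positivity
  obtain ⟨x, hx⟩ : ∃ x : X, ∀ n, x ∈ C n := by
    refine weak_fip (R := 1) C ?_ ?_ ?_ ?_ ?_
    · intro n y hy
      obtain ⟨h1, h2, h3⟩ := hy
      refine ⟨h1, h2.trans ?_, h3⟩
      have hp1 : (0:ℝ) < (n:ℝ) + 1 := by positivity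
      have hp2 : (0:ℝ) < (n:ℝ) + 1 + 1 := by positivity
      rw [div_le_div_iff₀ (by push_cast; linarith) hp1]
      push_cast
      nlinarith
    · intro n y hy z hz a b ha hb hab
      obtain ⟨hy1, hy2, hy3⟩ := hy
      obtain ⟨hz1, hz2, hz3⟩ := hz
      refine ⟨?_, ?_, ?_⟩
      · calc ‖a • y + b • z‖ ≤ ‖a • y‖ + ‖b • z‖ := norm_add_le _ _
          _ = a * ‖y‖ + b * ‖z‖ := by
              rw [norm_smul, norm_smul, Real.norm_of_nonneg ha, Real.norm_of_nonneg hb]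
          _ ≤ a * 1 + b * 1 := by
              gcongr
          _ = 1 := by linarith
      · calc F (a • y + b • z) ≤ a * F y + b * F z :=
              hFcvx.2 (Set.mem_univ y) (Set.mem_univ z) ha hb hab
          _ ≤ a * (1 / (n + 1)) + b * (1 / (n + 1)) := by gcongr
          _ = 1 / (n + 1) := by rw [← add_mul, hab, one_mul]
      · have : ⟪φ, a • y + b • z⟫ = a * ⟪φ, y⟫ + b * ⟪φ, z⟫ := by
          rw [inner_add_right, real_inner_smul_right, real_inner_smul_right]
        calc ε = a * ε + b * ε := by rw [← add_mul, hab, one_mul]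
          _ ≤ a * ⟪φ, y⟫ + b * ⟪φ, z⟫ := by gcongr
          _ = ⟪φ, a • y + b • z⟫ := this.symm
    · intro n
      have : C n = (fun x : X => ‖x‖) ⁻¹' Set.Iic 1 ∩
          (F ⁻¹' Set.Iic (1 / (n + 1)) ∩ (fun x : X => ⟪φ, x⟫) ⁻¹' Set.Ici ε) := by
        ext y; simp [hC, and_assoc]
      rw [this]
      exact (isClosed_Iic.preimage continuous_norm).inter
        ((isClosed_Iic.preimage hFc).inter
          (isClosed_Ici.preimage (Continuous.inner continuous_const continuous_id)))
    · intro n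
      obtain ⟨ζ, h1, h2, h3⟩ := h (1 / (n + 1)) (hinv_pos n)
      exact ⟨ζ, h1, h2, h3⟩
    · intro n y hy
      simpa [mem_closedBall_zero_iff] using hy.1
  have hFx : F x = 0 := by
    refine le_antisymm ?_ (hFnn x)
    refine le_of_forall_pos_le_add ?_
    intro ε' hε'
    obtain ⟨n, hn⟩ := exists_nat_one_div_lt hε'
    have := (hx n).2.1
    push_cast at hn ⊢
    linarith
  have hx0 : x = 0 := hFdef x hFx
  have := (hx 0).2.2
  rw [hx0, inner_zero_right] at this
  linarith

end AuxLemmas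

/-- The functional `J^τ(η) = ½(∫_0^τ ‖B*T*_{τ-t}η‖ dt)² + ⟨ψ, T*_τ η⟩ + r‖η‖`. -/
noncomputable def Jfun {X U : Type*} [NormedAddCommGroup X] [InnerProductSpace ℝ X]
    [CompleteSpace X] [NormedAddCommGroup U] [InnerProductSpace ℝ U] [CompleteSpace U]
    (T : ℝ → X →L[ℝ] X) (B : U →L[ℝ] X) (r : ℝ) (ψ : X) (τ : ℝ) (η : X) : ℝ :=
  (1 / 2) * (∫ t in Set.Ioc 0 τ, ‖B.adjoint ((T (τ - t)).adjoint η)‖) ^ 2 +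
    ⟪ψ, (T τ).adjoint η⟫ + r * ‖η‖

set_option maxHeartbeats 1000000 in
/-- If `(A*, B*)` is approximately observable in any time, then for every
`τ > 0` the functional `J^τ` is continuous, strictly convex and coercive on `X`, and hence
has a unique minimizer. -/
theorem stmt9 {X U : Type*} [NormedAddCommGroup X] [InnerProductSpace ℝ X] [CompleteSpace X]
    [NormedAddCommGroup U] [InnerProductSpace ℝ U] [CompleteSpace U]
    (T : ℝ → X →L[ℝ] X) (B : U →L[ℝ] X)
    (hT0 : T 0 = 1)
    (hTadd : ∀ s t : ℝ, 0 ≤ s → 0 ≤ t → T (s + t) = (T s).comp (T t))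
    (hTcont : ∀ x : X, Continuous fun t => T t x)
    (r : ℝ) (hr : 0 < r) (ψ : X)
    -- approximate observability in any time
    (hobs : ∀ τ' : ℝ, 0 < τ' → ∀ η : X,
      (∀ t ∈ Set.Icc 0 τ', B.adjoint ((T t).adjoint η) = 0) → η = 0) :
    ∀ τ : ℝ, 0 < τ →
      Continuous (Jfun T B r ψ τ) ∧
      StrictConvexOn ℝ Set.univ (Jfun T B r ψ τ) ∧
      Tendsto (Jfun T B r ψ τ) (Bornology.cobounded X) atTop ∧
      ∃! η : X, ∀ ξ : X, Jfun T B r ψ τ η ≤ Jfun T B r ψ τ ξ := by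
  intro τ hτ
  -- uniform bound on ‖T s‖ for s ∈ [0, τ]
  obtain ⟨M, hM0, hM⟩ : ∃ M : ℝ, 0 ≤ M ∧ ∀ s ∈ Set.Icc (0:ℝ) τ, ‖T s‖ ≤ M := by
    have hpt : ∀ x : X, ∃ C : ℝ, ∀ i : Set.Icc (0:ℝ) τ, ‖T i x‖ ≤ C := by
      intro x
      obtain ⟨C, hC⟩ := isCompact_Icc.exists_bound_of_continuousOn (hTcont x).continuousOn
      exact ⟨C, fun i => hC i i.2⟩
    obtain ⟨M₀, hM₀⟩ := banach_steinhaus (g := fun i : Set.Icc (0:ℝ) τ => T i) hpt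
    exact ⟨max M₀ 0, le_max_right _ _,
      fun s hs => le_trans (hM₀ ⟨s, hs⟩) (le_max_left _ _)⟩
  set κ : ℝ := ‖B‖ * M with hκdef
  have hκ0 : 0 ≤ κ := mul_nonneg (norm_nonneg _) hM0
  set φ : X := T τ ψ with hφdef
  set w : X → ℝ → U := fun η t => B.adjoint ((T (τ - t)).adjoint η) with hwdef
  have hw_inner : ∀ η u t, ⟪w η t, u⟫ = ⟪η, T (τ - t) (B u)⟫ := by
    intro η u t
    rw [hwdef]
    rw [ContinuousLinearMap.adjoint_inner_left, ContinuousLinearMap.adjoint_inner_left]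
  have hw_cont : ∀ η u, Continuous fun t => ⟪w η t, u⟫ := by
    intro η u
    simp only [hw_inner]
    exact Continuous.inner continuous_const
      ((hTcont (B u)).comp (continuous_const.sub continuous_id))
  -- lower semicontinuity of the integrand
  have hw_lsc : ∀ η, LowerSemicontinuous fun t => ‖w η t‖ := by
    intro η t₀ y hy
    by_cases h0 : w η t₀ = 0
    · filter_upwards with t
      simp only [h0, norm_zero] at hy
      exact lt_of_lt_of_le hy (norm_nonneg _)
    · set u : U := ‖w η t₀‖⁻¹ • w η t₀ with hu
      have hn0 : (0:ℝ) < ‖w η t₀‖ := norm_pos_iff.mpr h0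
      have huip : ⟪w η t₀, u⟫ = ‖w η t₀‖ := by
        rw [hu, real_inner_smul_right, real_inner_self_eq_norm_mul_norm,
          ← mul_assoc, inv_mul_cancel₀ hn0.ne', one_mul]
      have hunorm : ‖u‖ = 1 := by
        rw [hu, norm_smul, norm_inv, norm_norm, inv_mul_cancel₀ hn0.ne']
      have hev : ∀ᶠ t in nhds t₀, y < ⟪w η t, u⟫ := by
        have hca := (hw_cont η u).continuousAt (x := t₀)
        refine ContinuousAt.eventually_lt continuousAt_const hca ?_
        rw [huip]
        exact hy
      filter_upwards [hev] with t ht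
      calc y < ⟪w η t, u⟫ := ht
        _ ≤ ‖w η t‖ * ‖u‖ := real_inner_le_norm _ _
        _ = ‖w η t‖ := by rw [hunorm, mul_one]
  have hmeas : ∀ η, Measurable fun t => ‖w η t‖ := fun η => (hw_lsc η).measurable
  have hbound : ∀ η, ∀ t ∈ Set.Icc (0:ℝ) τ, ‖w η t‖ ≤ κ * ‖η‖ := by
    intro η t ht
    have h1 : τ - t ∈ Set.Icc (0:ℝ) τ := ⟨by linarith [ht.2], by linarith [ht.1]⟩
    have h2 : ‖(T (τ - t)).adjoint η‖ ≤ M * ‖η‖ := by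
      calc ‖(T (τ - t)).adjoint η‖ ≤ ‖(T (τ - t)).adjoint‖ * ‖η‖ :=
            ContinuousLinearMap.le_opNorm _ _
        _ ≤ M * ‖η‖ := by
            gcongr
            rw [ContinuousLinearMap.adjoint.norm_map]
            exact hM _ h1
    calc ‖w η t‖ ≤ ‖B.adjoint‖ * ‖(T (τ - t)).adjoint η‖ := ContinuousLinearMap.le_opNorm _ _
      _ ≤ ‖B‖ * (M * ‖η‖) := by
          gcongr
          rw [ContinuousLinearMap.adjoint.norm_map]
      _ = κ * ‖η‖ := by rw [hκdef]; ring
  have hInt : ∀ η, IntegrableOn (fun t => ‖w η t‖) (Set.Ioc 0 τ) := by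
    intro η
    refine Integrable.mono' (integrable_const (κ * ‖η‖)) (hmeas η).aestronglyMeasurable ?_
    filter_upwards [self_mem_ae_restrict measurableSet_Ioc] with t ht
    rw [Real.norm_of_nonneg (norm_nonneg _)]
    exact hbound η t ⟨ht.1.le, ht.2⟩
  set F : X → ℝ := fun η => ∫ t in Set.Ioc 0 τ, ‖w η t‖ with hFdef
  have hJeq : Jfun T B r ψ τ = fun η => 1 / 2 * (F η) ^ 2 + ⟪φ, η⟫ + r * ‖η‖ := by
    funext η
    rw [Jfun, hφdef, ContinuousLinearMap.adjoint_inner_right]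
  -- properties of F
  have hFnn : ∀ η, 0 ≤ F η := fun η => integral_nonneg (fun t => norm_nonneg _)
  have hw_add : ∀ x y t, w (x + y) t = w x t + w y t := by
    intro x y t; simp [hwdef]
  have hw_smul : ∀ (c : ℝ) x t, w (c • x) t = c • w x t := by
    intro c x t; simp [hwdef]
  have hFadd : ∀ x y, F (x + y) ≤ F x + F y := by
    intro x y
    rw [hFdef]
    simp only [hw_add]
    have h1 : IntegrableOn (fun t => ‖w x t + w y t‖) (Set.Ioc 0 τ) := by
      have h2 := hInt (x + y)
      simpa only [hw_add] using h2
    calc (∫ t in Set.Ioc 0 τ, ‖w x t + w y t‖)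
        ≤ ∫ t in Set.Ioc 0 τ, (‖w x t‖ + ‖w y t‖) :=
          integral_mono h1 ((hInt x).add (hInt y)) (fun t => norm_add_le _ _)
      _ = F x + F y := integral_add (hInt x) (hInt y)
  have hFsmul : ∀ (c : ℝ) x, F (c • x) = |c| * F x := by
    intro c x
    rw [hFdef]
    simp only [hw_smul, norm_smul, Real.norm_eq_abs]
    exact integral_const_mul _ _
  have hFbound : ∀ z, F z ≤ κ * τ * ‖z‖ := by
    intro z
    rw [hFdef]
    calc (∫ t in Set.Ioc 0 τ, ‖w z t‖) ≤ ∫ _t in Set.Ioc 0 τ, κ * ‖z‖ := by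
          refine setIntegral_mono_on (hInt z) (integrable_const _) measurableSet_Ioc ?_
          exact fun t ht => hbound z t ⟨ht.1.le, ht.2⟩
      _ = κ * τ * ‖z‖ := by
          rw [setIntegral_const, Real.volume_real_Ioc, sub_zero, max_eq_left hτ.le,
            smul_eq_mul]
          ring
  have hFlip : ∀ x y, |F x - F y| ≤ κ * τ * ‖x - y‖ := by
    intro x y
    have h1 : F x ≤ F y + κ * τ * ‖x - y‖ := by
      have h2 : F x ≤ F y + F (x - y) := by
        have h3 := hFadd y (x - y)
        rw [add_sub_cancel] at h3
        exact h3
      exact h2.trans (by linarith [hFbound (x - y)])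
    have h4 : F y ≤ F x + κ * τ * ‖x - y‖ := by
      have h2 : F y ≤ F x + F (y - x) := by
        have h3 := hFadd x (y - x)
        rw [add_sub_cancel] at h3
        exact h3
      have h5 : ‖y - x‖ = ‖x - y‖ := norm_sub_rev _ _
      exact h2.trans (by rw [← h5]; linarith [hFbound (y - x)])
    rw [abs_sub_le_iff]
    constructor <;> linarith
  have hFcont : Continuous F := by
    have : LipschitzWith (Real.toNNReal (κ * τ)) F := by
      refine LipschitzWith.of_dist_le_mul ?_
      intro x y
      rw [Real.dist_eq, dist_eq_norm, Real.coe_toNNReal _ (by positivity)]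
      exact hFlip x y
    exact this.continuous
  have hFzero : ∀ η, F η = 0 → η = 0 := by
    intro η hFη
    have hae : (fun t => ‖w η t‖) =ᵐ[volume.restrict (Set.Ioc 0 τ)] 0 :=
      (integral_eq_zero_iff_of_nonneg (fun t => norm_nonneg _) (hInt η)).mp hFη
    have hae2 : ∀ᵐ t ∂(volume.restrict (Set.Ioc 0 τ)), ‖w η t‖ = 0 := by
      filter_upwards [hae] with t ht
      simpa using ht
    have hae3 : ∀ᵐ t ∂(volume : Measure ℝ), t ∈ Set.Ioc 0 τ → ‖w η t‖ = 0 :=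
      (ae_restrict_iff' measurableSet_Ioc).mp hae2
    have hnull : volume {t : ℝ | ¬(t ∈ Set.Ioc 0 τ → ‖w η t‖ = 0)} = 0 := ae_iff.mp hae3
    have hptw : ∀ t₀ ∈ Set.Icc (0:ℝ) τ, ‖w η t₀‖ = 0 := by
      intro t₀ ht₀
      by_contra hne
      have hpos : 0 < ‖w η t₀‖ := (norm_nonneg _).lt_of_ne (Ne.symm hne)
      have hev := hw_lsc η t₀ (‖w η t₀‖ / 2) (by linarith)
      obtain ⟨ε, hε, hball⟩ := Metric.eventually_nhds_iff_ball.mp hev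
      set a : ℝ := max 0 (t₀ - ε) with ha
      set b : ℝ := min τ (t₀ + ε) with hb
      have hab : a < b := by
        rw [ha, hb]
        rw [max_lt_iff]
        constructor
        · rw [lt_min_iff]; exact ⟨hτ, by linarith [ht₀.1]⟩
        · rw [lt_min_iff]; exact ⟨by linarith [ht₀.2], by linarith⟩
      have hsub : Set.Ioo a b ⊆ {t : ℝ | ¬(t ∈ Set.Ioc 0 τ → ‖w η t‖ = 0)} := by
        intro t ht
        have ht1 : t ∈ Set.Ioc 0 τ := by
          constructor
          · exact lt_of_le_of_lt (le_max_left 0 (t₀ - ε)) ht.1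
          · exact le_trans ht.2.le (min_le_left τ (t₀ + ε))
        have ht2 : t ∈ Metric.ball t₀ ε := by
          rw [Metric.mem_ball, Real.dist_eq, abs_lt]
          constructor
          · have := ht.1; have h7 := le_max_right 0 (t₀ - ε); linarith [lt_of_le_of_lt h7 ht.1]
          · have h8 := min_le_right τ (t₀ + ε); linarith [lt_of_lt_of_le ht.2 h8]
        have ht3 := hball t ht2
        intro hcon
        have := hcon ht1
        linarith [ht3, this, hpos]
      have hmeaspos : (0:ENNReal) < volume (Set.Ioo a b) := by
        rw [Real.volume_Ioo]
        exact ENNReal.ofReal_pos.mpr (by linarith)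
      have : volume (Set.Ioo a b) ≤ volume {t : ℝ | ¬(t ∈ Set.Ioc 0 τ → ‖w η t‖ = 0)} := measure_mono hsub
      rw [hnull] at this
      exact absurd (le_antisymm this zero_le) (ne_of_gt hmeaspos)
    refine hobs τ hτ η ?_
    intro s hs
    have h9 : τ - s ∈ Set.Icc (0:ℝ) τ := ⟨by linarith [hs.2], by linarith [hs.1]⟩
    have h10 := hptw (τ - s) h9
    rw [norm_eq_zero] at h10
    have h11 : w η (τ - s) = B.adjoint ((T s).adjoint η) := by
      rw [hwdef]
      simp only [sub_sub_cancel]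
    rw [← h11]
    exact h10
  have hFcvx : ConvexOn ℝ Set.univ F := by
    refine ⟨convex_univ, fun x _ y _ a b ha hb hab => ?_⟩
    calc F (a • x + b • y) ≤ F (a • x) + F (b • y) := hFadd _ _
      _ = |a| * F x + |b| * F y := by rw [hFsmul, hFsmul]
      _ = a * F x + b * F y := by rw [abs_of_nonneg ha, abs_of_nonneg hb]
  -- Part 1: continuity
  have hJcont : Continuous (Jfun T B r ψ τ) := by
    rw [hJeq]
    exact ((continuous_const.mul (hFcont.pow 2)).add
      (Continuous.inner continuous_const continuous_id)).add
      (continuous_const.mul continuous_norm)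
  -- Part 2: strict convexity
  have hJsc : StrictConvexOn ℝ Set.univ (Jfun T B r ψ τ) := by
    rw [hJeq]
    refine ⟨convex_univ, ?_⟩
    intro x _ y _ hxy a b ha hb hab
    simp only [smul_eq_mul]
    have hFmid : F (a • x + b • y) ≤ a * F x + b * F y :=
      hFcvx.2 (Set.mem_univ x) (Set.mem_univ y) ha.le hb.le hab
    have hsq : (F (a • x + b • y)) ^ 2 ≤ (a * F x + b * F y) ^ 2 := by
      have h1 := hFnn (a • x + b • y)
      nlinarith
    have hnmid : ‖a • x + b • y‖ ≤ a * ‖x‖ + b * ‖y‖ := by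
      calc ‖a • x + b • y‖ ≤ ‖a • x‖ + ‖b • y‖ := norm_add_le _ _
        _ = a * ‖x‖ + b * ‖y‖ := by
            rw [norm_smul, norm_smul, Real.norm_of_nonneg ha.le, Real.norm_of_nonneg hb.le]
    have hip : ⟪φ, a • x + b • y⟫ = a * ⟪φ, x⟫ + b * ⟪φ, y⟫ := by
      rw [inner_add_right, real_inner_smul_right, real_inner_smul_right]
    by_cases hray : SameRay ℝ x y
    · -- in this case `F x ≠ F y`, so the square term is strictly convex
      have hF0 : F 0 = 0 := by simpa using hFsmul 0 0
      have hFne : F x ≠ F y := by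
        by_cases hx0 : x = 0
        · have hy0 : y ≠ 0 := fun h => hxy (by rw [hx0, h])
          have hFy : F y ≠ 0 := fun h => hy0 (hFzero y h)
          rw [hx0, hF0]
          exact fun h => hFy h.symm
        · by_cases hy0 : y = 0
          · have hFx : F x ≠ 0 := fun h => hx0 (hFzero x h)
            rw [hy0, hF0]
            exact hFx
          · obtain ⟨c₁, c₂, hc₁, hc₂, hc⟩ := hray.exists_pos hx0 hy0
            have hyx : y = (c₁ / c₂) • x := by
              calc y = c₂⁻¹ • (c₂ • y) := by
                    rw [smul_smul, inv_mul_cancel₀ hc₂.ne', one_smul]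
                _ = c₂⁻¹ • (c₁ • x) := by rw [hc]
                _ = (c₁ / c₂) • x := by rw [smul_smul, ← div_eq_inv_mul]
            have hFy : F y = (c₁ / c₂) * F x := by
              rw [hyx, hFsmul, abs_of_pos (div_pos hc₁ hc₂)]
            have hFxpos : 0 < F x :=
              (hFnn x).lt_of_ne fun h => hx0 (hFzero x h.symm)
            have hcne : c₁ / c₂ ≠ 1 := fun h => hxy (by rw [hyx, h, one_smul])
            intro heq
            rw [hFy] at heq
            have h1 : 1 * F x = (c₁ / c₂) * F x := by rw [one_mul]; exact heq
            exact hcne (mul_right_cancel₀ hFxpos.ne' h1).symm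
      have hstrict : (a * F x + b * F y) ^ 2 < a * (F x) ^ 2 + b * (F y) ^ 2 := by
        have h2 : 0 < (F x - F y) ^ 2 := by
          rcases (sub_ne_zero.mpr hFne).lt_or_gt with h | h <;> nlinarith
        nlinarith [mul_pos ha hb]
      have hmul : r * ‖a • x + b • y‖ ≤ r * (a * ‖x‖ + b * ‖y‖) :=
        mul_le_mul_of_nonneg_left hnmid hr.le
      nlinarith [hsq, hstrict, hip, hmul]
    · -- in this case the norm term is strictly convex
      have hns : ¬SameRay ℝ (a • x) (b • y) := by
        intro hcon
        apply hray
        have h1 : SameRay ℝ x (b • y) := by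
          have h2 := hcon.nonneg_smul_left (a := a⁻¹) (inv_nonneg.mpr ha.le)
          rwa [smul_smul, inv_mul_cancel₀ ha.ne', one_smul] at h2
        have h3 := h1.nonneg_smul_right (a := b⁻¹) (inv_nonneg.mpr hb.le)
        rwa [smul_smul, inv_mul_cancel₀ hb.ne', one_smul] at h3
      have hnmid_strict : ‖a • x + b • y‖ < a * ‖x‖ + b * ‖y‖ := by
        have h4 := norm_add_lt_of_not_sameRay hns
        rwa [norm_smul, norm_smul, Real.norm_of_nonneg ha.le, Real.norm_of_nonneg hb.le] at h4
      have hsqc : (a * F x + b * F y) ^ 2 ≤ a * (F x) ^ 2 + b * (F y) ^ 2 := by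
        nlinarith [mul_pos ha hb, sq_nonneg (F x - F y)]
      have hmul : r * ‖a • x + b • y‖ < r * (a * ‖x‖ + b * ‖y‖) :=
        mul_lt_mul_of_pos_left hnmid_strict hr
      nlinarith [hsq, hsqc, hip, hmul]
  -- Part 3: coercivity
  have hJcoer : Tendsto (Jfun T B r ψ τ) (Bornology.cobounded X) atTop := by
    obtain ⟨δ, hδ, hδ'⟩ := key_small_inner F hFcont hFcvx hFnn hFzero (-φ) (half_pos hr)
    rw [hJeq, tendsto_atTop]
    intro M₁
    set R : ℝ := max 1 (max (2 * |M₁| / r) (2 * (‖φ‖ + |M₁|) / δ ^ 2)) with hRdef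
    filter_upwards [eventually_cobounded_le_norm R] with η hη
    have hR1 : (1:ℝ) ≤ R := le_max_left _ _
    have hηn : 1 ≤ ‖η‖ := le_trans hR1 hη
    have hηpos : 0 < ‖η‖ := lt_of_lt_of_le one_pos hηn
    set ζ : X := ‖η‖⁻¹ • η with hζdef
    have hζn : ‖ζ‖ = 1 := by
      rw [hζdef, norm_smul, norm_inv, norm_norm, inv_mul_cancel₀ hηpos.ne']
    have hηζ : η = ‖η‖ • ζ := by
      rw [hζdef, smul_smul, mul_inv_cancel₀ hηpos.ne', one_smul]
    have hFη : F η = ‖η‖ * F ζ := by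
      conv_lhs => rw [hηζ]
      rw [hFsmul, abs_of_pos hηpos]
    have hipη : ⟪φ, η⟫ = ‖η‖ * ⟪φ, ζ⟫ := by
      conv_lhs => rw [hηζ]
      rw [real_inner_smul_right]
    by_cases hc : F ζ ≤ δ
    · have h1 : ⟪-φ, ζ⟫ < r / 2 := hδ' ζ hζn.le hc
      have h2 : -(r / 2) < ⟪φ, ζ⟫ := by
        rw [inner_neg_left] at h1; linarith
    --   (r/2) * ‖η‖ ≥ |M₁|
      have h3 : 2 * |M₁| / r ≤ ‖η‖ :=
        le_trans (le_trans (le_max_left _ _) (le_max_right _ _)) hη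
      rw [div_le_iff₀ hr] at h3
      have h4 : ‖η‖ * -(r / 2) ≤ ‖η‖ * ⟪φ, ζ⟫ :=
        mul_le_mul_of_nonneg_left h2.le (norm_nonneg η)
      have h5 : 0 ≤ (F η) ^ 2 := sq_nonneg _
      have h6 : M₁ ≤ |M₁| := le_abs_self M₁
      nlinarith [hipη]
    · push_neg at hc
      have hFη' : δ * ‖η‖ ≤ F η := by
        rw [hFη]; nlinarith
      have hsq : (δ * ‖η‖) ^ 2 ≤ (F η) ^ 2 := by
        have : 0 ≤ δ * ‖η‖ := by positivity
        nlinarith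
      have hiplow : -(‖φ‖ * ‖η‖) ≤ ⟪φ, η⟫ :=
        (abs_le.mp (abs_real_inner_le_norm φ η)).1
      have h3 : 2 * (‖φ‖ + |M₁|) / δ ^ 2 ≤ ‖η‖ :=
        le_trans (le_trans (le_max_right _ _) (le_max_right _ _)) hη
      rw [div_le_iff₀ (by positivity)] at h3
      have h6 : M₁ ≤ |M₁| := le_abs_self M₁
      have h7 : 0 ≤ |M₁| := abs_nonneg M₁
      have h8 : 0 ≤ r * ‖η‖ := by positivity
      have h9 := mul_le_mul_of_nonneg_right h3 (norm_nonneg η)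
      nlinarith [hsq]
  -- Part 4: existence and uniqueness of minimizer
  have hJmin : ∃! η : X, ∀ ξ : X, Jfun T B r ψ τ η ≤ Jfun T B r ψ τ ξ := by
    set J : X → ℝ := Jfun T B r ψ τ with hJdef
    have hJconv : ConvexOn ℝ Set.univ J := hJsc.convexOn
    -- the sublevel set of `J 0` is bounded
    obtain ⟨R₀, hR₀⟩ : ∃ R₀ : ℝ, ∀ η : X, R₀ ≤ ‖η‖ → J 0 + 1 ≤ J η := by
      have hev : ∀ᶠ η in Bornology.cobounded X, J 0 + 1 ≤ J η :=
        hJcoer.eventually (eventually_ge_atTop _)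
      rw [← comap_norm_atTop, eventually_comap] at hev
      rw [eventually_atTop] at hev
      obtain ⟨R₀, hR₀⟩ := hev
      exact ⟨R₀, fun η hη => hR₀ ‖η‖ hη η rfl⟩
    set R₁ : ℝ := max R₀ 0 with hR₁def
    set Q : Set X := {x | J x ≤ J 0} with hQdef
    have hQb : ∀ x ∈ Q, ‖x‖ ≤ R₁ := by
      intro x hx
      by_contra hcon
      push_neg at hcon
      have h1 : R₀ ≤ ‖x‖ := le_trans (le_max_left _ _) hcon.le
      have h2 := hR₀ x h1
      have h3 : J x ≤ J 0 := hx
      linarith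
    have hJlow : ∀ x : X, -(‖φ‖ * ‖x‖) ≤ J x := by
      intro x
      have h1 : -(‖φ‖ * ‖x‖) ≤ ⟪φ, x⟫ := (abs_le.mp (abs_real_inner_le_norm φ x)).1
      have h2 : 0 ≤ r * ‖x‖ := by positivity
      have h3 : 0 ≤ (F x) ^ 2 := sq_nonneg _
      rw [hJeq]
      dsimp only
      linarith
    set Sim : Set ℝ := J '' Q with hSimdef
    have hSne : Sim.Nonempty := ⟨J 0, 0, show J 0 ≤ J 0 from le_refl _, rfl⟩
    have hSbdd : BddBelow Sim := by
      refine ⟨-(‖φ‖ * R₁) , ?_⟩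
      rintro s ⟨x, hx, rfl⟩
      refine le_trans ?_ (hJlow x)
      have h1 : ‖x‖ ≤ R₁ := hQb x hx
      have h2 : 0 ≤ ‖φ‖ := norm_nonneg _
      nlinarith
    set m : ℝ := sInf Sim with hmdef
    set C : ℕ → Set X := fun n => {x | J x ≤ min (J 0) (m + 1 / (n + 1))} with hCdef
    have hinvpos : ∀ n : ℕ, (0:ℝ) < 1 / (n + 1) := by intro n; positivity
    have hinvmono : ∀ n : ℕ, (1:ℝ) / (n + 1 + 1) ≤ 1 / (n + 1) := by
      intro n
      have h1 : (0:ℝ) < (n:ℝ) + 1 := by positivity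
      rw [div_le_div_iff₀ (by linarith) h1]
      linarith
    obtain ⟨η₀, hη₀⟩ : ∃ x : X, ∀ n, x ∈ C n := by
      refine weak_fip (R := R₁) C ?_ ?_ ?_ ?_ ?_
      · intro n x hx
        simp only [hCdef, Set.mem_setOf_eq] at hx ⊢
        refine le_trans hx (min_le_min (le_refl _) ?_)
        have := hinvmono n
        push_cast
        push_cast at this
        linarith
      · intro n
        have h1 := hJconv.convex_le (min (J 0) (m + 1 / (n + 1)))
        rw [Set.sep_univ] at h1
        exact h1
      · intro n
        exact isClosed_Iic.preimage hJcont
      · intro n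
        obtain ⟨s, hsS, hs⟩ := exists_lt_of_csInf_lt hSne
          (lt_add_of_pos_right m (hinvpos n))
        obtain ⟨x, hxQ, rfl⟩ := hsS
        exact ⟨x, le_min hxQ hs.le⟩
      · intro n x hx
        simp only [hCdef, Set.mem_setOf_eq] at hx
        rw [mem_closedBall_zero_iff]
        exact hQb x (show J x ≤ J 0 from le_trans hx (min_le_left _ _))
    have hη₀m : J η₀ ≤ m := by
      refine le_of_forall_pos_le_add ?_
      intro ε hε
      obtain ⟨n, hn⟩ := exists_nat_one_div_lt hε
      have h1 := hη₀ n
      have h2 : J η₀ ≤ m + 1 / (n + 1) := le_trans h1 (min_le_right _ _)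
      push_cast at hn h2
      linarith
    have hmin : ∀ ξ : X, J η₀ ≤ J ξ := by
      intro ξ
      by_cases hξQ : ξ ∈ Q
      · exact hη₀m.trans (csInf_le hSbdd ⟨ξ, hξQ, rfl⟩)
      · have h1 : J η₀ ≤ J 0 := hη₀m.trans (csInf_le hSbdd ⟨0, show J 0 ≤ J 0 from le_refl _, rfl⟩)
        have h2 : J 0 ≤ J ξ := le_of_not_ge hξQ
        exact h1.trans h2
    refine ⟨η₀, hmin, ?_⟩
    intro y hy
    by_contra hne
    have hJy : J y = J η₀ := le_antisymm (hy η₀) (hmin y)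
    have hsc := hJsc.2 (Set.mem_univ y) (Set.mem_univ η₀) hne
      (by norm_num : (0:ℝ) < 1/2) (by norm_num : (0:ℝ) < 1/2) (by norm_num)
    simp only [smul_eq_mul] at hsc
    have h2 := hy ((1/2 : ℝ) • y + (1/2 : ℝ) • η₀)
    rw [hJy] at hsc
    linarith
  exact ⟨hJcont, hJsc, hJcoer, hJmin⟩
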